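/- arXiv:2201.05201 — 3 statements merged into one kernel-verified Lean document; each statement's English description precedes it below -/
import Mathlib

section
/- Let n ≥ 1, let L ⊂ ℝ^n be a full-rank lattice, and let τ > 0 be real. Then Θ(L,iτ) = lim_{s→∞} (πτ/s)^{−s} · ζ_{s/(πτ)}(L,s), where the limit is taken as the real parameter s tends to infinity. -/
open scoped BigOperators
open MeasureTheory Filter Matrix

noncomputable section

/-- `ℝ^n` with the Euclidean norm. -/
abbrev Vn (n : ℕ) := EuclideanSpace ℝ (Fin n)

/-- The set of all integer combinations of the vectors `B`. -/
def latticeOf {n k : ℕ} (B : Fin k → Vn n) : Set (Vn n) :=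
  Set.range (fun z : Fin k → ℤ => ∑ i, (z i : ℝ) • B i)

/-- `L` is a lattice of rank `k` in `ℝ^n`: the set of integer combinations of `k`
linearly independent vectors. -/
def IsLatticeOfRank (n k : ℕ) (L : Set (Vn n)) : Prop :=
  ∃ B : Fin k → Vn n, LinearIndependent ℝ B ∧ L = latticeOf B

/-- `L` is a full-rank lattice in `ℝ^n`. -/
def IsLattice (n : ℕ) (L : Set (Vn n)) : Prop := IsLatticeOfRank n n L

/-- Gram determinant `det(BᵀB)` of a family of vectors; the determinant of the lattice
they generate is its square root. -/
def gramDet {n d : ℕ} (v : Fin d → Vn n) : ℝ :=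
  Matrix.det (Matrix.of fun i j => (inner ℝ (v i) (v j) : ℝ))

/-- Every sublattice of `L` has determinant at least one.  (Every sublattice of a lattice
is the integer span of finitely many ℝ-linearly independent lattice vectors, and its
determinant is the square root of their Gram determinant.) -/
def SubdetGeOne (n : ℕ) (L : Set (Vn n)) : Prop :=
  ∀ (d : ℕ) (v : Fin d → Vn n), (∀ i, v i ∈ L) → LinearIndependent ℝ v →
    1 ≤ Real.sqrt (gramDet v)

/-- `L` is a stable lattice: a full-rank lattice of determinant one all of whose
sublattices have determinant at least one. -/
def IsStable (n : ℕ) (L : Set (Vn n)) : Prop :=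
  (∃ B : Fin n → Vn n, LinearIndependent ℝ B ∧ L = latticeOf B ∧ Real.sqrt (gramDet B) = 1)
    ∧ SubdetGeOne n L

/-- The integer lattice `ℤ^n ⊂ ℝ^n`. -/
def intLattice (n : ℕ) : Set (Vn n) := {y | ∀ i, ∃ z : ℤ, y i = (z : ℝ)}

/-- `ζ'_q(L, s) = Σ_{y ∈ L, y ≠ 0} (‖y‖² + q)^{-s}`. -/
def zetaP (n : ℕ) (L : Set (Vn n)) (s q : ℝ) : ℝ :=
  ∑' y : {y : Vn n // y ∈ L ∧ y ≠ 0}, (‖(y : Vn n)‖ ^ 2 + q) ^ (-s)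

/-- `ζ_q(L, s) = Σ_{y ∈ L} (‖y‖² + q)^{-s}`. -/
def zetaQ (n : ℕ) (L : Set (Vn n)) (s q : ℝ) : ℝ :=
  ∑' y : L, (‖(y : Vn n)‖ ^ 2 + q) ^ (-s)

/-- The lattice theta function `Θ(L, iτ) = Σ_{y ∈ L} exp(-πτ‖y‖²)`. -/
def theta (n : ℕ) (L : Set (Vn n)) (τ : ℝ) : ℝ :=
  ∑' y : L, Real.exp (-Real.pi * τ * ‖(y : Vn n)‖ ^ 2)

/-- Isomorphism of full-rank lattices in `ℝ^n` via an orthogonal transformation. -/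
def IsoLattices (n : ℕ) (L1 L2 : Set (Vn n)) : Prop :=
  ∃ R : Vn n ≃ₗᵢ[ℝ] Vn n, R '' L2 = L1

/-- Direct sum of two lattices, realized in `ℝ^{n1+n2}` by concatenating coordinates. -/
def dsum {n1 n2 : ℕ} (L1 : Set (Vn n1)) (L2 : Set (Vn n2)) : Set (Vn (n1 + n2)) :=
  {y | ∃ x ∈ L1, ∃ z ∈ L2,
    ∀ i : Fin (n1 + n2), y i = Fin.append (fun j => x j) (fun j => z j) i}

/-- Lattices (possibly in different ambient spaces) are isomorphic: there is a linear map
that is isometric on `span L` and carries `L` onto `L'`. -/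
def LatticeIso {m m' : ℕ} (L : Set (Vn m)) (L' : Set (Vn m')) : Prop :=
  ∃ f : Vn m →ₗ[ℝ] Vn m', (∀ x ∈ Submodule.span ℝ L, ‖f x‖ = ‖x‖) ∧ f '' L = L'

/-- A rank-`k` lattice is decomposable if it is isomorphic to the direct sum of two
non-trivial lattices of strictly lower rank. -/
def Decomposable {m : ℕ} (k : ℕ) (L : Set (Vn m)) : Prop :=
  ∃ (m1 m2 k1 k2 : ℕ) (L1 : Set (Vn m1)) (L2 : Set (Vn m2)),
    1 ≤ k1 ∧ 1 ≤ k2 ∧ k1 + k2 = k ∧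
    IsLatticeOfRank m1 k1 L1 ∧ IsLatticeOfRank m2 k2 L2 ∧ LatticeIso L (dsum L1 L2)

/-- `L'` is a sublattice of `L`: an additive subgroup of `L`. -/
def IsSublatticeOf {n : ℕ} (L L' : Set (Vn n)) : Prop :=
  L' ⊆ L ∧ (0 : Vn n) ∈ L' ∧ ∀ x ∈ L', ∀ y ∈ L', x - y ∈ L'

/-- `L'` is a primitive sublattice of `L`, i.e. `L' = L ∩ span(L')`. -/
def IsPrimitive {n : ℕ} (L L' : Set (Vn n)) : Prop :=
  IsSublatticeOf L L' ∧ L' = L ∩ (Submodule.span ℝ L' : Set (Vn n))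

/-- The quotient lattice `L/L'`: the orthogonal projection of `L` onto `span(L')ᗮ`. -/
def quotLattice {n : ℕ} (L L' : Set (Vn n)) : Set (Vn n) :=
  (fun x => ((Submodule.orthogonalProjectionOnto (Submodule.span ℝ L')ᗮ x : Vn n))) '' L

/-- The (internal, orthogonal) direct sum of two subsets of `ℝ^n`. -/
def sumSet {n : ℕ} (A B : Set (Vn n)) : Set (Vn n) := {v | ∃ x ∈ A, ∃ y ∈ B, v = x + y}

/-- The modified Bessel function of the second kind,
`K_α(x) = ∫₀^∞ exp(-x cosh t) cosh(αt) dt`. -/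
def Kfun (α x : ℝ) : ℝ :=
  ∫ t in Set.Ioi (0 : ℝ), Real.exp (-x * Real.cosh t) * Real.cosh (α * t)

/-- `K̄_α(x) = 2^{1-α} x^α K_α(x)` for `x > 0`, and `K̄_α(0) = Γ(α)`. -/
def Kbar (α x : ℝ) : ℝ :=
  if x = 0 then Real.Gamma α else 2 ^ (1 - α) * x ^ α * Kfun α x

/-- The dual lattice `L* = {w : ⟨w, y⟩ ∈ ℤ for all y ∈ L}`. -/
def dualLattice (n : ℕ) (L : Set (Vn n)) : Set (Vn n) :=
  {w | ∀ y ∈ L, ∃ z : ℤ, (inner ℝ w y : ℝ) = (z : ℝ)}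

/-- `λ₁(L)`: the length of the shortest non-zero vector of `L`. -/
def lambda1 {n : ℕ} (L : Set (Vn n)) : ℝ := sInf {r | ∃ y ∈ L, y ≠ 0 ∧ ‖y‖ = r}

/-- `E(A) = Σ_{(x,y) ∈ L1 × L2, (x,y) ≠ 0} (‖x‖² + yᵀ e^A y + q)^{-s}`. -/
def Efun (n d : ℕ) (L1 : Set (Vn (n - d))) (L2 : Set (Vn d)) (s q : ℝ)
    (A : Matrix (Fin d) (Fin d) ℝ) : ℝ :=
  ∑' p : {p : Vn (n - d) × Vn d // p.1 ∈ L1 ∧ p.2 ∈ L2 ∧ p ≠ 0},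
    (‖p.1.1‖ ^ 2 +
      (fun i => p.1.2 i) ⬝ᵥ (NormedSpace.exp A).mulVec (fun i => p.1.2 i) + q) ^ (-s)

private lemma lemA (b : ℝ) (hb : 0 < b) : Summable (fun k : ℤ => (1 + b * (k:ℝ)^2)⁻¹) := by
  rw [← (Set.finite_singleton (0:ℤ)).summable_compl_iff]
  have hs : Summable (fun k : ℤ => b⁻¹ * (1 / (k:ℝ)^2)) :=
    (Real.summable_one_div_int_pow.mpr one_lt_two).mul_left b⁻¹
  refine Summable.of_nonneg_of_le (fun k => ?_) (fun k => ?_) (hs.subtype _)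
  · have h : (0:ℝ) < 1 + b * ((k:ℤ):ℝ)^2 := by positivity
    exact inv_nonneg.mpr h.le
  · rcases k with ⟨k, hk⟩
    have hk0 : (k:ℝ) ≠ 0 := by
      simp only [Set.mem_compl_iff, Set.mem_singleton_iff] at hk
      exact_mod_cast hk
    have h1 : b * (k:ℝ)^2 ≤ 1 + b * (k:ℝ)^2 := by linarith
    have h2 : (0:ℝ) < b * (k:ℝ)^2 := by positivity
    calc (1 + b * (k:ℝ)^2)⁻¹ ≤ (b * (k:ℝ)^2)⁻¹ := inv_anti₀ h2 h1
      _ = b⁻¹ * (1 / (k:ℝ)^2) := by field_simp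

private lemma lemB (f : ℤ → ℝ) (hf : Summable f) (h0 : ∀ k, 0 ≤ f k) :
    ∀ n : ℕ, Summable (fun z : Fin n → ℤ => ∏ i, f (z i)) := by
  intro n
  induction n with
  | zero => exact summable_of_finite_support (Set.toFinite _)
  | succ m ih =>
    have h : Summable (fun p : ℤ × (Fin m → ℤ) => f p.1 * ∏ i, f (p.2 i)) :=
      @Summable.mul_of_nonneg ℤ (Fin m → ℤ) f (fun z => ∏ i, f (z i)) hf ih h0
        (fun z => Finset.prod_nonneg fun i _ => h0 _)
    have key : Summable ((fun p : ℤ × (Fin m → ℤ) => f p.1 * ∏ i, f (p.2 i)) ∘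
        (Fin.consEquiv (fun _ : Fin (m+1) => ℤ)).symm) := h.comp_injective (Equiv.injective _)
    refine key.congr fun z => ?_
    simp [Fin.consEquiv, Fin.tail, Fin.prod_univ_succ]


private lemma lemC (n : ℕ) (hn : 1 ≤ n) (B : Fin n → Vn n) (hB : LinearIndependent ℝ B)
    (a : ℝ) (ha : 0 < a) :
    Summable (fun y : latticeOf B => ((1 + a * ‖(y : Vn n)‖ ^ 2) ^ n)⁻¹) := by
  classical
  set φ : (Fin n → ℤ) → Vn n := fun z => ∑ i, (z i : ℝ) • B i with hφ
  have hinj : Function.Injective φ := by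
    intro z z' h
    have hcard : Fintype.card (Fin n) = Module.finrank ℝ (Vn n) := by
      simp [finrank_euclideanSpace]
    have h2 : ∑ i, ((z i : ℝ) - (z' i : ℝ)) • B i = 0 := by
      have h' := sub_eq_zero.mpr h
      simpa [sub_smul, Finset.sum_sub_distrib] using h'
    have h3 := (Fintype.linearIndependent_iff.mp hB) _ h2
    funext i
    have := h3 i
    have : (z i : ℝ) = (z' i : ℝ) := by linarith [sub_eq_zero.mp this]
    exact_mod_cast this
  -- basis
  have hcard : Fintype.card (Fin n) = Module.finrank ℝ (Vn n) := by
    simp [finrank_euclideanSpace]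
  haveI : Nonempty (Fin n) := ⟨⟨0, by omega⟩⟩
  let bB : Module.Basis (Fin n) ℝ (Vn n) := basisOfLinearIndependentOfCardEqFinrank hB hcard
  have hbB : ∀ i, bB i = B i :=
    fun i => congrFun (coe_basisOfLinearIndependentOfCardEqFinrank hB hcard) i
  -- continuity bound
  let T : Vn n →ₗ[ℝ] (Fin n → ℝ) := bB.equivFun
  have hTc : Continuous T := T.continuous_of_finiteDimensional
  obtain ⟨C, hC0, hC⟩ : ∃ C : ℝ, 0 < C ∧ ∀ v : Vn n, ‖T v‖ ≤ C * ‖v‖ := by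
    set F := LinearMap.toContinuousLinearMap T
    refine ⟨‖F‖ + 1, by positivity, fun v => ?_⟩
    calc ‖T v‖ = ‖F v‖ := rfl
      _ ≤ ‖F‖ * ‖v‖ := F.le_opNorm v
      _ ≤ (‖F‖ + 1) * ‖v‖ := by
          have := norm_nonneg v
          nlinarith
  have hTφ : ∀ z : Fin n → ℤ, T (φ z) = fun i => (z i : ℝ) := by
    intro z
    have : φ z = bB.equivFun.symm (fun i => (z i : ℝ)) := by
      rw [Module.Basis.equivFun_symm_apply]
      simp [hφ, hbB]
    rw [this]
    exact bB.equivFun.apply_symm_apply _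
  set b := a / (n * C ^ 2) with hbdef
  have hb : 0 < b := by
    have : (0:ℝ) < n := by exact_mod_cast Nat.pos_of_ne_zero (by omega)
    positivity
  -- the comparison function
  have hsum : Summable (fun z : Fin n → ℤ => ∏ i, (1 + b * (z i : ℝ) ^ 2)⁻¹) :=
    lemB _ (lemA b hb) (fun k => by positivity) n
  have hcomp : Summable (fun z : Fin n → ℤ => ((1 + a * ‖φ z‖ ^ 2) ^ n)⁻¹) := by
    refine Summable.of_nonneg_of_le (fun z => ?_) (fun z => ?_) hsum
    · have h : (0:ℝ) < 1 + a * ‖φ z‖ ^ 2 := by positivity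
      positivity
    · have hZ : ∀ i, ((z i : ℝ)) ^ 2 ≤ C ^ 2 * ‖φ z‖ ^ 2 := by
        intro i
        have h1 : |(z i : ℝ)| ≤ ‖T (φ z)‖ := by
          rw [hTφ z]
          simpa using norm_le_pi_norm (fun j => ((z j : ℝ))) i
        have h2 : ‖T (φ z)‖ ≤ C * ‖φ z‖ := hC _
        have h3 : |(z i : ℝ)| ≤ C * ‖φ z‖ := h1.trans h2
        calc ((z i : ℝ)) ^ 2 = |(z i : ℝ)| ^ 2 := (sq_abs _).symm
          _ ≤ (C * ‖φ z‖) ^ 2 := by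
              exact pow_le_pow_left₀ (abs_nonneg _) h3 2
          _ = C ^ 2 * ‖φ z‖ ^ 2 := by ring
      have hsumsq : ∑ i, ((z i : ℝ)) ^ 2 ≤ n * (C ^ 2 * ‖φ z‖ ^ 2) := by
        calc ∑ i, ((z i : ℝ)) ^ 2 ≤ ∑ _i : Fin n, C ^ 2 * ‖φ z‖ ^ 2 :=
              Finset.sum_le_sum (fun i _ => hZ i)
          _ = n * (C ^ 2 * ‖φ z‖ ^ 2) := by simp [mul_comm]
      have hkey : 1 + b * ∑ i, ((z i : ℝ)) ^ 2 ≤ 1 + a * ‖φ z‖ ^ 2 := by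
        have hnC : (0:ℝ) < n * C ^ 2 := by
          have : (0:ℝ) < n := by exact_mod_cast Nat.pos_of_ne_zero (by omega)
          positivity
        have : b * ∑ i, ((z i : ℝ)) ^ 2 ≤ b * (n * (C ^ 2 * ‖φ z‖ ^ 2)) :=
          mul_le_mul_of_nonneg_left hsumsq hb.le
        have heq : b * (n * (C ^ 2 * ‖φ z‖ ^ 2)) = a * ‖φ z‖ ^ 2 := by
          rw [hbdef]; field_simp
        linarith [heq ▸ this]
      have hprod : ∏ i, (1 + b * (z i : ℝ) ^ 2) ≤ (1 + b * ∑ i, ((z i : ℝ)) ^ 2) ^ n := by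
        have : ∀ i : Fin n, 1 + b * (z i : ℝ) ^ 2 ≤ 1 + b * ∑ j, ((z j : ℝ)) ^ 2 := by
          intro i
          have hle : ((z i : ℝ)) ^ 2 ≤ ∑ j, ((z j : ℝ)) ^ 2 :=
            Finset.single_le_sum (f := fun j : Fin n => ((z j : ℝ)) ^ 2)
              (fun j _ => sq_nonneg _) (Finset.mem_univ i)
          nlinarith
        calc ∏ i, (1 + b * (z i : ℝ) ^ 2) ≤ ∏ _i : Fin n, (1 + b * ∑ j, ((z j : ℝ)) ^ 2) :=
              Finset.prod_le_prod (fun i _ => by positivity) (fun i _ => this i)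
          _ = (1 + b * ∑ j, ((z j : ℝ)) ^ 2) ^ n := by simp
      have hpow : ∏ i, (1 + b * (z i : ℝ) ^ 2) ≤ (1 + a * ‖φ z‖ ^ 2) ^ n := by
        refine hprod.trans (pow_le_pow_left₀ ?_ hkey n)
        have : (0:ℝ) ≤ b * ∑ i, ((z i : ℝ)) ^ 2 := by
          exact mul_nonneg hb.le (Finset.sum_nonneg fun i _ => sq_nonneg _)
        linarith
      have hprodpos : (0:ℝ) < ∏ i, (1 + b * (z i : ℝ) ^ 2) :=
        Finset.prod_pos (fun i _ => by positivity)
      calc ((1 + a * ‖φ z‖ ^ 2) ^ n)⁻¹ ≤ (∏ i, (1 + b * (z i : ℝ) ^ 2))⁻¹ :=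
            inv_anti₀ hprodpos hpow
        _ = ∏ i, (1 + b * (z i : ℝ) ^ 2)⁻¹ := by
            rw [Finset.prod_inv_distrib]
  -- transfer to the lattice
  have : Summable (fun y : Set.range φ => ((1 + a * ‖(y : Vn n)‖ ^ 2) ^ n)⁻¹) := by
    rw [← (Equiv.ofInjective φ hinj).summable_iff]
    exact hcomp.congr (fun z => rfl)
  exact this

/-- For any full-rank lattice `L ⊂ ℝ^n` and `τ > 0`,
`Θ(L,iτ) = lim_{s→∞} (πτ/s)^{-s} ζ_{s/(πτ)}(L,s)`. -/
theorem statement4 (n : ℕ) (hn : 1 ≤ n) (L : Set (Vn n)) (hL : IsLattice n L)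
    (τ : ℝ) (hτ : 0 < τ) :
    Tendsto (fun s : ℝ => (Real.pi * τ / s) ^ (-s) * zetaQ n L s (s / (Real.pi * τ)))
      atTop (nhds (theta n L τ)) := by
  classical
  obtain ⟨B, hB, hLB⟩ := hL
  subst hLB
  set L := latticeOf B with hLdef
  have hπτ : 0 < Real.pi * τ := mul_pos Real.pi_pos hτ
  have hn0 : (0:ℝ) < n := by exact_mod_cast Nat.pos_of_ne_zero (by omega)
  set c : ↥L → ℝ := fun y => Real.pi * τ * ‖(y : Vn n)‖ ^ 2 with hc
  have hc0 : ∀ y, 0 ≤ c y := fun y => by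
    have := sq_nonneg ‖(y : Vn n)‖
    positivity
  set bound : ↥L → ℝ := fun y => ((1 + c y / n) ^ n)⁻¹ with hbounddef
  have hbound_sum : Summable bound := by
    have h := lemC n hn B hB (Real.pi * τ / n) (by positivity)
    refine h.congr fun y => ?_
    simp only [hbounddef, hc]
    congr 2
    ring
  have hlim : Tendsto (fun s : ℝ => ∑' y : ↥L, (1 + c y / s) ^ (-s)) atTop
      (nhds (∑' y : ↥L, Real.exp (-c y))) := by
    apply tendsto_tsum_of_dominated_convergence hbound_sum
    · intro y
      have h1 : Tendsto (fun s : ℝ => (1 + c y / s) ^ s) atTop (nhds (Real.exp (c y))) :=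
        Real.tendsto_one_add_div_rpow_exp (c y)
      have h2 := h1.inv₀ (Real.exp_ne_zero _)
      rw [← Real.exp_neg] at h2
      apply h2.congr'
      filter_upwards [eventually_gt_atTop (0:ℝ)] with s hs
      have hb0 : (0:ℝ) ≤ 1 + c y / s := by
        have := div_nonneg (hc0 y) hs.le
        linarith
      rw [Real.rpow_neg hb0]
    · filter_upwards [eventually_ge_atTop (n:ℝ)] with s hs
      intro y
      have hn' : (1:ℝ) ≤ n := by exact_mod_cast hn
      have hs1 : (1:ℝ) ≤ s := hn'.trans hs
      have hs0 : (0:ℝ) < s := by linarith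
      have hcy : 0 ≤ c y / s := div_nonneg (hc0 y) hs0.le
      have hx1 : (1:ℝ) ≤ 1 + c y / s := by linarith
      have hx0 : (0:ℝ) ≤ 1 + c y / s := by linarith
      have hnorm : ‖(1 + c y / s) ^ (-s)‖ = ((1 + c y / s) ^ s)⁻¹ := by
        rw [Real.norm_eq_abs, abs_of_nonneg (Real.rpow_nonneg hx0 _), Real.rpow_neg hx0]
      rw [hnorm, hbounddef]
      have hsn : (1 + c y / s) ^ s = ((1 + c y / s) ^ (s / n)) ^ (n:ℕ) := by
        rw [← Real.rpow_natCast ((1 + c y / s) ^ (s / n)) n, ← Real.rpow_mul hx0,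
          div_mul_cancel₀ _ (ne_of_gt hn0)]
      have hdiv1 : (1:ℝ) ≤ s / n := by
        rw [le_div_iff₀ hn0]; linarith
      have hber : 1 + c y / n ≤ (1 + c y / s) ^ (s / n) := by
        have h := one_add_mul_self_le_rpow_one_add (by linarith : (-1:ℝ) ≤ c y / s) hdiv1
        have heq : s / n * (c y / s) = c y / n := by
          field_simp
        rw [heq] at h
        exact h
      have hposn : (0:ℝ) < (1 + c y / n) ^ n := by
        have : (0:ℝ) ≤ c y / n := div_nonneg (hc0 y) hn0.le
        positivity
      refine inv_anti₀ hposn ?_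
      rw [hsn]
      exact pow_le_pow_left₀ (by have := div_nonneg (hc0 y) hn0.le; linarith) hber n
  have htheta : theta n L τ = ∑' y : ↥L, Real.exp (-c y) := by
    refine tsum_congr fun y => ?_
    congr 1
    simp only [hc]
    ring
  rw [htheta]
  apply hlim.congr'
  filter_upwards [eventually_gt_atTop (0:ℝ)] with s hs
  unfold zetaQ
  rw [← tsum_mul_left]
  refine tsum_congr fun y => ?_
  have h1 : (0:ℝ) ≤ Real.pi * τ / s := le_of_lt (div_pos hπτ hs)
  have h2 : (0:ℝ) ≤ ‖(y : Vn n)‖ ^ 2 + s / (Real.pi * τ) := by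
    have := sq_nonneg ‖(y : Vn n)‖
    have := le_of_lt (div_pos hs hπτ)
    linarith
  rw [← Real.mul_rpow h1 h2]
  congr 1
  simp only [hc]
  field_simp
  ring
end
end

section
/- Let L ⊂ ℝ^n be a stable full-rank lattice such that every decomposition L ≅ L_1 ⊕ L_2 with L_2 non-trivial and indecomposable has rank(L_2) = 1. Then L ≅ ℤ^n. -/
open scoped BigOperators
open MeasureTheory Filter Matrix

noncomputable section

namespace S8

open scoped RealInnerProductSpace

variable {a b : ℕ}

/-- concatenation of vectors -/
def catFun (x : Vn a) (z : Vn b) : Vn (a + b) :=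
  WithLp.toLp 2 (Fin.append (fun j => x j) (fun j => z j))

@[simp] lemma cat_left (x : Vn a) (z : Vn b) (i : Fin a) :
    catFun x z (Fin.castAdd b i) = x i := Fin.append_left (fun j => x j) (fun j => z j) i

@[simp] lemma cat_right (x : Vn a) (z : Vn b) (i : Fin b) :
    catFun x z (Fin.natAdd a i) = z i := Fin.append_right (fun j => x j) (fun j => z j) i

lemma cat_add (x x' : Vn a) (z z' : Vn b) :
    catFun (x + x') (z + z') = catFun x z + catFun x' z' := by
  ext i
  induction i using Fin.addCases with
  | left i => simp [PiLp.add_apply]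
  | right i => simp [PiLp.add_apply]

lemma cat_smul (c : ℝ) (x : Vn a) (z : Vn b) :
    catFun (c • x) (c • z) = c • catFun x z := by
  ext i
  induction i using Fin.addCases with
  | left i => simp [PiLp.smul_apply]
  | right i => simp [PiLp.smul_apply]

/-- first projection as a linear map -/
def fstL (a b : ℕ) : Vn (a + b) →ₗ[ℝ] Vn a where
  toFun y := WithLp.toLp 2 (fun i => y (Fin.castAdd b i))
  map_add' y z := rfl
  map_smul' c y := rfl

/-- second projection as a linear map -/
def sndL (a b : ℕ) : Vn (a + b) →ₗ[ℝ] Vn b where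
  toFun y := WithLp.toLp 2 (fun i => y (Fin.natAdd a i))
  map_add' y z := rfl
  map_smul' c y := rfl

@[simp] lemma fstL_apply (y : Vn (a + b)) (i : Fin a) :
    fstL a b y i = y (Fin.castAdd b i) := rfl

@[simp] lemma sndL_apply (y : Vn (a + b)) (i : Fin b) :
    sndL a b y i = y (Fin.natAdd a i) := rfl

@[simp] lemma fstL_cat (x : Vn a) (z : Vn b) : fstL a b (catFun x z) = x := by
  ext i; simp

@[simp] lemma sndL_cat (x : Vn a) (z : Vn b) : sndL a b (catFun x z) = z := by
  ext i; simp

lemma cat_fst_snd (y : Vn (a + b)) : catFun (fstL a b y) (sndL a b y) = y := by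
  ext i
  induction i using Fin.addCases with
  | left i => simp
  | right i => simp

lemma inner_cat (x x' : Vn a) (z z' : Vn b) :
    ⟪catFun x z, catFun x' z'⟫ = ⟪x, x'⟫ + ⟪z, z'⟫ := by
  simp only [PiLp.inner_apply, RCLike.inner_apply, conj_trivial]
  rw [Fin.sum_univ_add]
  simp


lemma mem_latticeOf {n k : ℕ} {B : Fin k → Vn n} {y : Vn n} :
    y ∈ latticeOf B ↔ ∃ z : Fin k → ℤ, y = ∑ i, (z i : ℝ) • B i := by
  constructor
  · rintro ⟨z, rfl⟩; exact ⟨z, rfl⟩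
  · rintro ⟨z, rfl⟩; exact ⟨z, rfl⟩

lemma self_mem_latticeOf {n k : ℕ} (B : Fin k → Vn n) (i : Fin k) : B i ∈ latticeOf B := by
  refine ⟨fun j => if j = i then 1 else 0, ?_⟩
  simp [ite_smul]

lemma image_latticeOf {n m k : ℕ} (f : Vn n →ₗ[ℝ] Vn m) (B : Fin k → Vn n) :
    f '' latticeOf B = latticeOf (fun i => f (B i)) := by
  ext y
  constructor
  · rintro ⟨x, ⟨z, rfl⟩, rfl⟩
    exact ⟨z, by simp [map_sum, _root_.map_smul]⟩
  · rintro ⟨z, rfl⟩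
    exact ⟨∑ i, (z i : ℝ) • B i, ⟨z, rfl⟩, by simp [map_sum, _root_.map_smul]⟩

lemma latticeIso_trans {m m' m'' : ℕ} {A : Set (Vn m)} {B : Set (Vn m')} {C : Set (Vn m'')}
    (h1 : LatticeIso A B) (h2 : LatticeIso B C) : LatticeIso A C := by
  obtain ⟨f, hf, hfA⟩ := h1
  obtain ⟨g, hg, hgB⟩ := h2
  have hspan : Submodule.map f (Submodule.span ℝ A) = Submodule.span ℝ B := by
    rw [Submodule.map_span, hfA]
  refine ⟨g.comp f, ?_, ?_⟩
  · intro x hx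
    have hfx : f x ∈ Submodule.span ℝ B := by
      rw [← hspan]; exact Submodule.mem_map_of_mem hx
    simp only [LinearMap.comp_apply]
    rw [hg _ hfx, hf _ hx]
  · rw [LinearMap.coe_comp, Set.image_comp, hfA, hgB]

lemma inner_map_of_isometryOn {m m' : ℕ} (f : Vn m →ₗ[ℝ] Vn m') (S : Set (Vn m))
    (hf : ∀ x ∈ Submodule.span ℝ S, ‖f x‖ = ‖x‖) {x y : Vn m}
    (hx : x ∈ Submodule.span ℝ S) (hy : y ∈ Submodule.span ℝ S) :
    ⟪f x, f y⟫ = ⟪x, y⟫ := by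
  have hxy : x + y ∈ Submodule.span ℝ S := Submodule.add_mem _ hx hy
  have h1 := hf _ hx
  have h2 := hf _ hy
  have h3 := hf _ hxy
  have e1 : ‖f x + f y‖ = ‖x + y‖ := by rw [← map_add]; exact h3
  have p1 := norm_add_sq_real (f x) (f y)
  have p2 := norm_add_sq_real x y
  rw [e1, h1, h2, p2] at p1
  linarith

lemma injOn_span {m m' : ℕ} (f : Vn m →ₗ[ℝ] Vn m') (S : Set (Vn m))
    (hf : ∀ x ∈ Submodule.span ℝ S, ‖f x‖ = ‖x‖) {x y : Vn m}
    (hx : x ∈ Submodule.span ℝ S) (hy : y ∈ Submodule.span ℝ S) (hxy : f x = f y) : x = y := by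
  have h : ‖f (x - y)‖ = ‖x - y‖ := hf _ (Submodule.sub_mem _ hx hy)
  rw [map_sub, hxy, sub_self, norm_zero] at h
  exact sub_eq_zero.mp (norm_eq_zero.mp h.symm)

lemma mem_dsum {n1 n2 : ℕ} {L1 : Set (Vn n1)} {L2 : Set (Vn n2)} {y : Vn (n1 + n2)} :
    y ∈ dsum L1 L2 ↔ ∃ x ∈ L1, ∃ z ∈ L2, y = catFun x z := by
  constructor
  · rintro ⟨x, hx, z, hz, h⟩
    exact ⟨x, hx, z, hz, PiLp.ext h⟩
  · rintro ⟨x, hx, z, hz, rfl⟩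
    exact ⟨x, hx, z, hz, fun i => rfl⟩

lemma norm_eq_of_sq_eq {E F : Type*} [NormedAddCommGroup E] [NormedAddCommGroup F]
    {x : E} {y : F} (h : ‖x‖ ^ 2 = ‖y‖ ^ 2) : ‖x‖ = ‖y‖ := by
  rw [← Real.sqrt_sq (norm_nonneg x), h, Real.sqrt_sq (norm_nonneg y)]

lemma norm_cat_sq (x : Vn a) (z : Vn b) : ‖catFun x z‖ ^ 2 = ‖x‖ ^ 2 + ‖z‖ ^ 2 := by
  rw [← real_inner_self_eq_norm_sq, ← real_inner_self_eq_norm_sq,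
    ← real_inner_self_eq_norm_sq, inner_cat]

lemma norm_sq_split (y : Vn (a + b)) : ‖y‖ ^ 2 = ‖fstL a b y‖ ^ 2 + ‖sndL a b y‖ ^ 2 := by
  conv_lhs => rw [← cat_fst_snd y]
  exact norm_cat_sq _ _

/-- combine two linear maps into a concatenation -/
def catML {c a b : ℕ} (u : Vn c →ₗ[ℝ] Vn a) (v : Vn c →ₗ[ℝ] Vn b) : Vn c →ₗ[ℝ] Vn (a + b) where
  toFun y := catFun (u y) (v y)
  map_add' y z := by
    show catFun (u (y + z)) (v (y + z)) = catFun (u y) (v y) + catFun (u z) (v z)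
    rw [map_add, map_add, cat_add]
  map_smul' r y := by
    show catFun (u (r • y)) (v (r • y)) = r • catFun (u y) (v y)
    rw [_root_.map_smul, _root_.map_smul, cat_smul]

@[simp] lemma catML_apply {c a b : ℕ} (u : Vn c →ₗ[ℝ] Vn a) (v : Vn c →ₗ[ℝ] Vn b) (y : Vn c) :
    catML u v y = catFun (u y) (v y) := rfl

lemma fstL_mem_span_dsum {n1 n2 : ℕ} {L1 : Set (Vn n1)} {L2 : Set (Vn n2)} {y : Vn (n1 + n2)}
    (hy : y ∈ Submodule.span ℝ (dsum L1 L2)) : fstL n1 n2 y ∈ Submodule.span ℝ L1 := by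
  have himg : fstL n1 n2 '' dsum L1 L2 ⊆ L1 := by
    rintro _ ⟨w, hw, rfl⟩
    obtain ⟨x, hx, z, hz, rfl⟩ := mem_dsum.mp hw
    simpa using hx
  have h2 : fstL n1 n2 y ∈ Submodule.map (fstL n1 n2) (Submodule.span ℝ (dsum L1 L2)) :=
    Submodule.mem_map_of_mem hy
  rw [Submodule.map_span] at h2
  exact Submodule.span_mono himg h2

lemma sndL_mem_span_dsum {n1 n2 : ℕ} {L1 : Set (Vn n1)} {L2 : Set (Vn n2)} {y : Vn (n1 + n2)}
    (hy : y ∈ Submodule.span ℝ (dsum L1 L2)) : sndL n1 n2 y ∈ Submodule.span ℝ L2 := by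
  have himg : sndL n1 n2 '' dsum L1 L2 ⊆ L2 := by
    rintro _ ⟨w, hw, rfl⟩
    obtain ⟨x, hx, z, hz, rfl⟩ := mem_dsum.mp hw
    simpa using hz
  have h2 : sndL n1 n2 y ∈ Submodule.map (sndL n1 n2) (Submodule.span ℝ (dsum L1 L2)) :=
    Submodule.mem_map_of_mem hy
  rw [Submodule.map_span] at h2
  exact Submodule.span_mono himg h2

lemma latticeIso_dsum_congr_right {n1 n2 n2' : ℕ} {L1 : Set (Vn n1)} {L2 : Set (Vn n2)}
    {X : Set (Vn n2')} (h : LatticeIso L2 X) : LatticeIso (dsum L1 L2) (dsum L1 X) := by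
  obtain ⟨g, hg, hgX⟩ := h
  refine ⟨catML (fstL n1 n2) (g.comp (sndL n1 n2)), ?_, ?_⟩
  · intro y hy
    apply norm_eq_of_sq_eq
    rw [catML_apply, norm_cat_sq, LinearMap.comp_apply,
      hg _ (sndL_mem_span_dsum hy), ← norm_sq_split]
  · ext y
    constructor
    · rintro ⟨w, hw, rfl⟩
      obtain ⟨x, hx, z, hz, rfl⟩ := mem_dsum.mp hw
      refine mem_dsum.mpr ⟨x, hx, g z, ?_, by simp⟩
      rw [← hgX]; exact ⟨z, hz, rfl⟩
    · intro hy
      obtain ⟨x, hx, w, hw, rfl⟩ := mem_dsum.mp hy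
      rw [← hgX] at hw
      obtain ⟨z, hz, rfl⟩ := hw
      exact ⟨catFun x z, mem_dsum.mpr ⟨x, hx, z, hz, rfl⟩, by simp⟩

lemma latticeIso_dsum_comm {n1 n2 : ℕ} (L1 : Set (Vn n1)) (L2 : Set (Vn n2)) :
    LatticeIso (dsum L1 L2) (dsum L2 L1) := by
  refine ⟨catML (sndL n1 n2) (fstL n1 n2), ?_, ?_⟩
  · intro y _
    apply norm_eq_of_sq_eq
    rw [catML_apply, norm_cat_sq, norm_sq_split y]
    ring
  · ext y
    constructor
    · rintro ⟨w, hw, rfl⟩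
      obtain ⟨x, hx, z, hz, rfl⟩ := mem_dsum.mp hw
      exact mem_dsum.mpr ⟨z, hz, x, hx, by simp⟩
    · intro hy
      obtain ⟨z, hz, x, hx, rfl⟩ := mem_dsum.mp hy
      exact ⟨catFun x z, mem_dsum.mpr ⟨x, hx, z, hz, rfl⟩, by simp⟩

lemma latticeIso_dsum_assoc {n1 n2 n3 : ℕ} (L1 : Set (Vn n1)) (L2 : Set (Vn n2))
    (L3 : Set (Vn n3)) : LatticeIso (dsum L1 (dsum L2 L3)) (dsum (dsum L1 L2) L3) := by
  refine ⟨catML (catML (fstL n1 (n2 + n3)) ((fstL n2 n3).comp (sndL n1 (n2 + n3))))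
      ((sndL n2 n3).comp (sndL n1 (n2 + n3))), ?_, ?_⟩
  · intro y _
    apply norm_eq_of_sq_eq
    rw [catML_apply, norm_cat_sq, catML_apply, norm_cat_sq, norm_sq_split y,
      norm_sq_split (sndL n1 (n2 + n3) y)]
    simp only [LinearMap.comp_apply]
    ring
  · ext y
    constructor
    · rintro ⟨w, hw, rfl⟩
      obtain ⟨x, hx, v, hv, rfl⟩ := mem_dsum.mp hw
      obtain ⟨u, hu, z, hz, rfl⟩ := mem_dsum.mp hv
      refine mem_dsum.mpr ⟨catFun x u, mem_dsum.mpr ⟨x, hx, u, hu, rfl⟩, z, hz, ?_⟩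
      simp
    · intro hy
      obtain ⟨w, hw, z, hz, rfl⟩ := mem_dsum.mp hy
      obtain ⟨x, hx, u, hu, rfl⟩ := mem_dsum.mp hw
      refine ⟨catFun x (catFun u z),
        mem_dsum.mpr ⟨x, hx, catFun u z, mem_dsum.mpr ⟨u, hu, z, hz, rfl⟩, rfl⟩, ?_⟩
      simp


def inlL (a b : ℕ) : Vn a →ₗ[ℝ] Vn (a + b) := catML LinearMap.id 0

def inrL (a b : ℕ) : Vn b →ₗ[ℝ] Vn (a + b) := catML 0 LinearMap.id

@[simp] lemma inlL_apply (x : Vn a) : inlL a b x = catFun x 0 := by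
  simp [inlL]

@[simp] lemma inrL_apply (z : Vn b) : inrL a b z = catFun 0 z := by
  simp [inrL]

lemma cat_eq_add (x : Vn a) (z : Vn b) : catFun x z = catFun x 0 + catFun 0 z := by
  rw [← cat_add, add_zero, zero_add]

/-- the concatenated family generating a direct sum -/
def famU {μ1 μ2 k1 k2 : ℕ} (u : Fin k1 → Vn μ1) (w : Fin k2 → Vn μ2) :
    Fin (k1 + k2) → Vn (μ1 + μ2) :=
  Fin.append (fun i => inlL μ1 μ2 (u i)) (fun j => inrL μ1 μ2 (w j))

lemma sum_famU {μ1 μ2 k1 k2 : ℕ} (u : Fin k1 → Vn μ1) (w : Fin k2 → Vn μ2)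
    (c : Fin (k1 + k2) → ℝ) :
    ∑ t, c t • famU u w t
      = catFun (∑ i, c (Fin.castAdd k2 i) • u i) (∑ j, c (Fin.natAdd k1 j) • w j) := by
  rw [Fin.sum_univ_add]
  simp only [famU, Fin.append_left, Fin.append_right]
  simp only [← _root_.map_smul, ← map_sum]
  rw [cat_eq_add (∑ i, c (Fin.castAdd k2 i) • u i), inlL_apply, inrL_apply]

lemma dsum_latticeOf {μ1 μ2 k1 k2 : ℕ} (u : Fin k1 → Vn μ1) (w : Fin k2 → Vn μ2) :
    dsum (latticeOf u) (latticeOf w) = latticeOf (famU u w) := by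
  ext y
  rw [mem_dsum, mem_latticeOf]
  constructor
  · rintro ⟨x, hx, z, hz, rfl⟩
    obtain ⟨α, rfl⟩ := mem_latticeOf.mp hx
    obtain ⟨β, rfl⟩ := mem_latticeOf.mp hz
    refine ⟨Fin.append α β, ?_⟩
    rw [show (fun t => ((Fin.append α β t : ℤ) : ℝ) • famU u w t)
        = fun t => ((fun s => ((Fin.append α β s : ℤ) : ℝ)) t) • famU u w t from rfl,
      sum_famU]
    simp [Fin.append_left, Fin.append_right]
  · rintro ⟨c, rfl⟩
    refine ⟨∑ i, ((c (Fin.castAdd k2 i) : ℤ) : ℝ) • u i, mem_latticeOf.mpr ⟨_, rfl⟩,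
      ∑ j, ((c (Fin.natAdd k1 j) : ℤ) : ℝ) • w j, mem_latticeOf.mpr ⟨_, rfl⟩, ?_⟩
    exact sum_famU u w (fun t => ((c t : ℤ) : ℝ))

lemma linearIndependent_famU {μ1 μ2 k1 k2 : ℕ} {u : Fin k1 → Vn μ1} {w : Fin k2 → Vn μ2}
    (hu : LinearIndependent ℝ u) (hw : LinearIndependent ℝ w) :
    LinearIndependent ℝ (famU u w) := by
  rw [Fintype.linearIndependent_iff] at hu hw ⊢
  intro g hg
  rw [sum_famU] at hg
  have hfst : (∑ i, g (Fin.castAdd k2 i) • u i) = 0 := by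
    have := congrArg (fstL μ1 μ2) hg
    rwa [fstL_cat, map_zero] at this
  have hsnd : (∑ j, g (Fin.natAdd k1 j) • w j) = 0 := by
    have := congrArg (sndL μ1 μ2) hg
    rwa [sndL_cat, map_zero] at this
  intro t
  induction t using Fin.addCases with
  | left i => exact hu _ hfst i
  | right j => exact hw _ hsnd j

lemma isLatticeOfRank_dsum {m1 m2 k1 k2 : ℕ} {L1 : Set (Vn m1)} {L2 : Set (Vn m2)}
    (h1 : IsLatticeOfRank m1 k1 L1) (h2 : IsLatticeOfRank m2 k2 L2) :
    IsLatticeOfRank (m1 + m2) (k1 + k2) (dsum L1 L2) := by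
  obtain ⟨B1, hB1, rfl⟩ := h1
  obtain ⟨B2, hB2, rfl⟩ := h2
  exact ⟨famU B1 B2, linearIndependent_famU hB1 hB2, dsum_latticeOf B1 B2⟩

lemma famU_ne_zero {μ1 μ2 k1 k2 : ℕ} {u : Fin k1 → Vn μ1} {w : Fin k2 → Vn μ2}
    (hu0 : ∀ i, u i ≠ 0) (hw0 : ∀ j, w j ≠ 0) : ∀ t, famU u w t ≠ 0 := by
  intro t
  induction t using Fin.addCases with
  | left i =>
    simp only [famU, Fin.append_left, inlL_apply]
    intro h
    exact hu0 i (by rw [← fstL_cat (u i) (0 : Vn μ2), h, map_zero])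
  | right j =>
    simp only [famU, Fin.append_right, inrL_apply]
    intro h
    exact hw0 j (by rw [← sndL_cat (0 : Vn μ1) (w j), h, map_zero])

lemma famU_orth {μ1 μ2 k1 k2 : ℕ} {u : Fin k1 → Vn μ1} {w : Fin k2 → Vn μ2}
    (huo : ∀ i j, i ≠ j → ⟪u i, u j⟫ = 0) (hwo : ∀ i j, i ≠ j → ⟪w i, w j⟫ = 0) :
    ∀ s t, s ≠ t → ⟪famU u w s, famU u w t⟫ = 0 := by
  intro s t hst
  induction s using Fin.addCases with
  | left i =>
    induction t using Fin.addCases with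
    | left j =>
      simp only [famU, Fin.append_left, inlL_apply, inner_cat]
      rw [huo i j (fun h => hst (by rw [h])), inner_zero_left, add_zero]
    | right j =>
      simp only [famU, Fin.append_left, Fin.append_right, inlL_apply, inrL_apply, inner_cat]
      rw [inner_zero_right, inner_zero_left, add_zero]
  | right i =>
    induction t using Fin.addCases with
    | left j =>
      simp only [famU, Fin.append_left, Fin.append_right, inlL_apply, inrL_apply, inner_cat]
      rw [inner_zero_left, inner_zero_right, add_zero]
    | right j =>
      simp only [famU, Fin.append_right, inrL_apply, inner_cat]
      rw [hwo i j (fun h => hst (by rw [h])), inner_zero_left, zero_add]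

lemma latticeOf_empty : latticeOf (fun i : Fin 0 => (0 : Vn 0)) = {(0 : Vn 0)} := by
  ext y
  constructor
  · rintro ⟨z, rfl⟩
    simp
  · rintro rfl
    exact ⟨0, by simp⟩

lemma isLatticeOfRank_triv : IsLatticeOfRank 0 0 {(0 : Vn 0)} :=
  ⟨fun _ => 0, linearIndependent_empty_type, latticeOf_empty.symm⟩

lemma latticeIso_zero_dsum {N : ℕ} (L : Set (Vn N)) :
    LatticeIso L (dsum ({0} : Set (Vn 0)) L) := by
  refine ⟨inrL 0 N, ?_, ?_⟩
  · intro x _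
    apply norm_eq_of_sq_eq
    rw [inrL_apply, norm_cat_sq]
    simp
  · ext y
    constructor
    · rintro ⟨x, hx, rfl⟩
      exact mem_dsum.mpr ⟨0, rfl, x, hx, by simp⟩
    · intro hy
      obtain ⟨x, hx, z, hz, rfl⟩ := mem_dsum.mp hy
      have hx0 : x = 0 := hx
      exact ⟨z, hz, by rw [hx0, inrL_apply]⟩

lemma pullback {m m' k : ℕ} {L2 : Set (Vn m)} {U : Fin k → Vn m'}
    (hU0 : ∀ i, U i ≠ 0) (hUorth : ∀ i j, i ≠ j → ⟪U i, U j⟫ = 0)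
    (h : LatticeIso L2 (latticeOf U)) :
    ∃ v : Fin k → Vn m, (∀ i, v i ≠ 0) ∧ (∀ i j, i ≠ j → ⟪v i, v j⟫ = 0) ∧ L2 = latticeOf v := by
  obtain ⟨g, hg, hgU⟩ := h
  have hmem : ∀ i, U i ∈ g '' L2 := by
    rw [hgU]
    exact fun i => self_mem_latticeOf U i
  choose v hvL2 hgv using hmem
  have hvspan : ∀ i, v i ∈ Submodule.span ℝ L2 := fun i => Submodule.subset_span (hvL2 i)
  have hsum_span : ∀ z : Fin k → ℤ, (∑ i, (z i : ℝ) • v i) ∈ Submodule.span ℝ L2 :=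
    fun z => Submodule.sum_mem _ (fun i _ => Submodule.smul_mem _ _ (hvspan i))
  have hgsum : ∀ z : Fin k → ℤ, g (∑ i, (z i : ℝ) • v i) = ∑ i, (z i : ℝ) • U i := by
    intro z
    rw [map_sum]
    exact Finset.sum_congr rfl (fun i _ => by rw [_root_.map_smul, hgv i])
  refine ⟨v, ?_, ?_, ?_⟩
  · intro i hvi
    exact hU0 i (by rw [← hgv i, hvi, map_zero])
  · intro i j hij
    have heq := inner_map_of_isometryOn g L2 hg (hvspan i) (hvspan j)
    rw [hgv i, hgv j] at heq
    rw [← heq]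
    exact hUorth i j hij
  · ext y
    constructor
    · intro hy
      have hgy : g y ∈ latticeOf U := by rw [← hgU]; exact ⟨y, hy, rfl⟩
      obtain ⟨z, hz⟩ := mem_latticeOf.mp hgy
      have : g y = g (∑ i, (z i : ℝ) • v i) := by rw [hgsum, hz]
      have hy' := injOn_span g L2 hg (Submodule.subset_span hy) (hsum_span z) this
      exact mem_latticeOf.mpr ⟨z, hy'⟩
    · intro hy
      obtain ⟨z, rfl⟩ := mem_latticeOf.mp hy
      have hgx : g (∑ i, (z i : ℝ) • v i) ∈ g '' L2 := by
        rw [hgU, hgsum]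
        exact mem_latticeOf.mpr ⟨z, rfl⟩
      obtain ⟨y, hyL2, hgy⟩ := hgx
      rw [← injOn_span g L2 hg (Submodule.subset_span hyL2) (hsum_span z) hgy]
      exact hyL2


lemma ortho_basis_of_hyp {N : ℕ} (L : Set (Vn N))
    (hyp : ∀ (m1 m2 k1 k2 : ℕ) (L1 : Set (Vn m1)) (L2 : Set (Vn m2)),
      IsLatticeOfRank m1 k1 L1 → IsLatticeOfRank m2 k2 L2 → 1 ≤ k2 →
      ¬ Decomposable k2 L2 → LatticeIso L (dsum L1 L2) → k2 = 1) :
    ∀ (k m1 k1 m2 : ℕ) (L1 : Set (Vn m1)) (L2 : Set (Vn m2)),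
      IsLatticeOfRank m1 k1 L1 → IsLatticeOfRank m2 k L2 → LatticeIso L (dsum L1 L2) →
      ∃ v : Fin k → Vn m2, (∀ i, v i ≠ 0) ∧ (∀ i j, i ≠ j → ⟪v i, v j⟫ = 0) ∧
        L2 = latticeOf v := by
  intro k
  induction k using Nat.strong_induction_on with
  | _ k IH =>
  intro m1 k1 m2 L1 L2 hL1 hL2 hiso
  by_cases hdec : Decomposable k L2
  · obtain ⟨μ1, μ2, κ1, κ2, M1, M2, hκ1, hκ2, hκ, hM1, hM2, hisoL2⟩ := hdec
    subst hκ
    have e1 : LatticeIso L (dsum (dsum L1 M1) M2) :=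
      latticeIso_trans hiso (latticeIso_trans (latticeIso_dsum_congr_right hisoL2)
        (latticeIso_dsum_assoc L1 M1 M2))
    have hisoL2' : LatticeIso L2 (dsum M2 M1) :=
      latticeIso_trans hisoL2 (latticeIso_dsum_comm M1 M2)
    have e2 : LatticeIso L (dsum (dsum L1 M2) M1) :=
      latticeIso_trans hiso (latticeIso_trans (latticeIso_dsum_congr_right hisoL2')
        (latticeIso_dsum_assoc L1 M2 M1))
    obtain ⟨u, hu0, huo, hM1eq⟩ := IH κ1 (by omega) (m1 + μ2) (k1 + κ2) μ1 (dsum L1 M2) M1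
      (isLatticeOfRank_dsum hL1 hM2) hM1 e2
    obtain ⟨w, hw0, hwo, hM2eq⟩ := IH κ2 (by omega) (m1 + μ1) (k1 + κ1) μ2 (dsum L1 M1) M2
      (isLatticeOfRank_dsum hL1 hM1) hM2 e1
    have hUeq : dsum M1 M2 = latticeOf (famU u w) := by
      rw [hM1eq, hM2eq, dsum_latticeOf]
    rw [hUeq] at hisoL2
    exact pullback (famU_ne_zero hu0 hw0) (famU_orth huo hwo) hisoL2
  · rcases Nat.eq_zero_or_pos k with hk0 | hk1
    · subst hk0
      obtain ⟨B, hB, rfl⟩ := hL2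
      exact ⟨B, fun i => i.elim0, fun i j _ => i.elim0, rfl⟩
    · have hk : k = 1 := hyp m1 m2 k1 k L1 L2 hL1 hL2 hk1 hdec hiso
      subst hk
      obtain ⟨B, hB, rfl⟩ := hL2
      exact ⟨B, fun i => hB.ne_zero i,
        fun i j hij => absurd (Subsingleton.elim i j) hij, rfl⟩


def evalL (N : ℕ) (j : Fin N) : Vn N →ₗ[ℝ] ℝ where
  toFun y := y j
  map_add' _ _ := rfl
  map_smul' _ _ := rfl

lemma apply_sum {k N : ℕ} (f : Fin k → Vn N) (j : Fin N) :
    (∑ i, f i) j = ∑ i, f i j := map_sum (evalL N j) f Finset.univ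

lemma gramDet_eq_sq {N : ℕ} (C : Fin N → Vn N) :
    gramDet C = (Matrix.of fun i j => C i j).det ^ 2 := by
  have h : (Matrix.of fun i j => (inner ℝ (C i) (C j) : ℝ))
      = Matrix.of (fun i j => C i j) * (Matrix.of fun i j => C i j)ᵀ := by
    ext i j
    rw [Matrix.mul_apply]
    simp [Matrix.transpose_apply, PiLp.inner_apply, RCLike.inner_apply, mul_comm]
  rw [gramDet, h, Matrix.det_mul, Matrix.det_transpose, sq]

lemma matrix_eq_int_mul {N : ℕ} (B v : Fin N → Vn N) (z : Fin N → Fin N → ℤ)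
    (h : ∀ i, B i = ∑ j, (z i j : ℝ) • v j) :
    Matrix.of (fun i j => B i j)
      = (Matrix.of z).map ((Int.cast : ℤ → ℝ)) * Matrix.of (fun i j => v i j) := by
  ext i k
  rw [Matrix.mul_apply, Matrix.of_apply]
  have hik : B i k = ∑ j, ((z i j : ℝ) • v j) k := by rw [h i, apply_sum]
  rw [hik]
  refine Finset.sum_congr rfl fun j _ => ?_
  simp [Matrix.map_apply, smul_eq_mul]

lemma latticeOf_single {N : ℕ} :
    latticeOf (fun i : Fin N => EuclideanSpace.single i (1 : ℝ)) = intLattice N := by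
  classical
  have key : ∀ (c : Fin N → ℤ) (j : Fin N),
      (∑ i, (c i : ℝ) • EuclideanSpace.single i (1 : ℝ)) j = (c j : ℝ) := by
    intro c j
    rw [apply_sum]
    simp [EuclideanSpace.single_apply, mul_ite]
  ext y
  constructor
  · rintro ⟨c, rfl⟩
    exact fun j => ⟨c j, key c j⟩
  · intro hy
    choose c hc using hy
    refine mem_latticeOf.mpr ⟨c, ?_⟩
    ext j
    rw [key c j]
    exact hc j

lemma final {N : ℕ} (hN : 1 ≤ N) (L : Set (Vn N)) (B : Fin N → Vn N)
    (hB : LinearIndependent ℝ B) (hLB : L = latticeOf B)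
    (hdetB : Real.sqrt (gramDet B) = 1) (hsub : SubdetGeOne N L)
    (v : Fin N → Vn N) (hv0 : ∀ i, v i ≠ 0) (hvo : ∀ i j, i ≠ j → ⟪v i, v j⟫ = 0)
    (hLv : L = latticeOf v) : LatticeIso L (intLattice N) := by
  classical
  haveI : Nonempty (Fin N) := ⟨⟨0, hN⟩⟩
  have hgB : gramDet B = 1 := Real.sqrt_eq_one.mp hdetB
  have hBv : ∀ i, ∃ c : Fin N → ℤ, B i = ∑ j, (c j : ℝ) • v j := fun i =>
    mem_latticeOf.mp (by rw [← hLv, hLB]; exact self_mem_latticeOf B i)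
  have hvB : ∀ i, ∃ c : Fin N → ℤ, v i = ∑ j, (c j : ℝ) • B j := fun i =>
    mem_latticeOf.mp (by rw [← hLB, hLv]; exact self_mem_latticeOf v i)
  choose z hz using hBv
  choose w hw using hvB
  have hMB := matrix_eq_int_mul B v z hz
  have hMv := matrix_eq_int_mul v B w hw
  have hdB : (Matrix.of fun i j => B i j).det
      = (((Matrix.of z).det : ℤ) : ℝ) * (Matrix.of fun i j => v i j).det := by
    rw [hMB, Matrix.det_mul]
    congr 1
    rw [show (Matrix.of z).map ((Int.cast : ℤ → ℝ))
        = (Matrix.of z).map (Int.castRingHom ℝ) from rfl]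
    exact ((Int.castRingHom ℝ).map_det (Matrix.of z)).symm
  have hdv : (Matrix.of fun i j => v i j).det
      = (((Matrix.of w).det : ℤ) : ℝ) * (Matrix.of fun i j => B i j).det := by
    rw [hMv, Matrix.det_mul]
    congr 1
    rw [show (Matrix.of w).map ((Int.cast : ℤ → ℝ))
        = (Matrix.of w).map (Int.castRingHom ℝ) from rfl]
    exact ((Int.castRingHom ℝ).map_det (Matrix.of w)).symm
  have hdBne : (Matrix.of fun i j => B i j).det ≠ 0 := by
    have hrows : LinearIndependent ℝ (Matrix.of fun i j => B i j).row :=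
      hB.map' (WithLp.linearEquiv 2 ℝ (Fin N → ℝ)).toLinearMap (LinearEquiv.ker _)
    rw [Matrix.linearIndependent_rows_iff_isUnit] at hrows
    exact isUnit_iff_ne_zero.mp ((Matrix.isUnit_iff_isUnit_det _).mp hrows)
  have hreal : (((Matrix.of z).det : ℤ) : ℝ) * (((Matrix.of w).det : ℤ) : ℝ) = 1 := by
    have h2 : (((Matrix.of z).det : ℤ) : ℝ) * (((Matrix.of w).det : ℤ) : ℝ)
        * (Matrix.of fun i j => B i j).det = 1 * (Matrix.of fun i j => B i j).det := by
      rw [one_mul, mul_assoc, ← hdv, ← hdB]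
    exact mul_right_cancel₀ hdBne h2
  have hint : (Matrix.of z).det * (Matrix.of w).det = 1 := by exact_mod_cast hreal
  have hw2 : ((((Matrix.of w).det : ℤ)) : ℝ) ^ 2 = 1 := by
    rcases Int.eq_one_or_neg_one_of_mul_eq_one (mul_comm (Matrix.of z).det _ ▸ hint) with h | h
      <;> rw [h] <;> norm_num
  have hgv : gramDet v = 1 := by
    rw [gramDet_eq_sq, hdv, mul_pow, hw2, one_mul, ← gramDet_eq_sq, hgB]
  have hdiag : gramDet v = ∏ i, ‖v i‖ ^ 2 := by
    rw [gramDet, show (Matrix.of fun i j => (inner ℝ (v i) (v j) : ℝ))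
        = Matrix.diagonal (fun i => ‖v i‖ ^ 2) from ?_, Matrix.det_diagonal]
    ext i j
    by_cases h : i = j
    · subst h
      rw [Matrix.of_apply, Matrix.diagonal_apply_eq]
      exact real_inner_self_eq_norm_sq _
    · rw [Matrix.of_apply, Matrix.diagonal_apply_ne _ h]
      exact hvo i j h
  have hone : ∀ i, 1 ≤ ‖v i‖ := by
    intro i
    have hmem : ∀ t : Fin 1, (fun _ : Fin 1 => v i) t ∈ L := fun _ => by
      rw [hLv]; exact self_mem_latticeOf v i
    have hli : LinearIndependent ℝ (fun _ : Fin 1 => v i) :=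
      linearIndependent_unique_iff.mpr (hv0 i)
    have hs := hsub 1 (fun _ => v i) hmem hli
    have hg1 : gramDet (fun _ : Fin 1 => v i) = ‖v i‖ ^ 2 := by
      rw [gramDet, Matrix.det_unique, Matrix.of_apply]
      exact real_inner_self_eq_norm_sq _
    rwa [hg1, Real.sqrt_sq (norm_nonneg _)] at hs
  have hnorm1 : ∀ i, ‖v i‖ = 1 := by
    intro i
    have hprod : ∏ j, ‖v j‖ ^ 2 = 1 := by rw [← hdiag, hgv]
    have h1le : (1 : ℝ) ≤ ∏ j ∈ Finset.univ.erase i, ‖v j‖ ^ 2 := by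
      calc (1 : ℝ) = ∏ _j ∈ Finset.univ.erase i, (1 : ℝ) := by rw [Finset.prod_const_one]
      _ ≤ ∏ j ∈ Finset.univ.erase i, ‖v j‖ ^ 2 := by
          refine Finset.prod_le_prod (fun _ _ => by norm_num) (fun j _ => ?_)
          nlinarith [hone j]
    have hsplit : ‖v i‖ ^ 2 * ∏ j ∈ Finset.univ.erase i, ‖v j‖ ^ 2 = 1 := by
      rw [Finset.mul_prod_erase Finset.univ (fun j => ‖v j‖ ^ 2) (Finset.mem_univ i), hprod]
    nlinarith [hone i, norm_nonneg (v i)]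
  have horth : Orthonormal ℝ v := by
    rw [orthonormal_iff_ite]
    intro i j
    by_cases h : i = j
    · subst h
      rw [real_inner_self_eq_norm_sq, hnorm1 i, if_pos rfl]
      norm_num
    · rw [if_neg h]
      exact hvo i j h
  have hcard : Fintype.card (Fin N) = Module.finrank ℝ (Vn N) := by
    simp [finrank_euclideanSpace_fin]
  let b := basisOfLinearIndependentOfCardEqFinrank horth.linearIndependent hcard
  have hbv : ⇑b = v := coe_basisOfLinearIndependentOfCardEqFinrank _ _
  let onb := b.toOrthonormalBasis (by rwa [hbv])
  refine ⟨onb.repr.toLinearEquiv.toLinearMap, fun x _ => onb.repr.norm_map x, ?_⟩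
  have himg : ⇑onb.repr.toLinearEquiv.toLinearMap = ⇑onb.repr := rfl
  rw [himg, hLv, show (⇑onb.repr '' latticeOf v
      = latticeOf (fun i => onb.repr.toLinearEquiv.toLinearMap (v i))) from
    image_latticeOf onb.repr.toLinearEquiv.toLinearMap v]
  have hfv : ∀ i, onb.repr.toLinearEquiv.toLinearMap (v i) = EuclideanSpace.single i (1 : ℝ) := by
    intro i
    have honb : onb i = v i := by
      rw [show ⇑onb = ⇑b from Module.Basis.coe_toOrthonormalBasis _ _, hbv]
    show onb.repr (v i) = _
    rw [← honb, onb.repr_self]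
  rw [show (fun i => onb.repr.toLinearEquiv.toLinearMap (v i))
      = fun i : Fin N => EuclideanSpace.single i (1 : ℝ) from funext hfv]
  exact latticeOf_single

end S8

/-- If `L ⊂ ℝ^n` is a stable full-rank lattice such that every
decomposition `L ≅ L₁ ⊕ L₂` with `L₂` non-trivial and indecomposable has `rank(L₂) = 1`,
then `L ≅ ℤ^n`. -/
theorem statement8 (n : ℕ) (hn : 1 ≤ n) (L : Set (Vn n)) (hL : IsStable n L)
    (hyp : ∀ (m1 m2 k1 k2 : ℕ) (L1 : Set (Vn m1)) (L2 : Set (Vn m2)),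
      IsLatticeOfRank m1 k1 L1 → IsLatticeOfRank m2 k2 L2 → 1 ≤ k2 →
      ¬ Decomposable k2 L2 → LatticeIso L (dsum L1 L2) → k2 = 1) :
    LatticeIso L (intLattice n) := by
  obtain ⟨⟨B, hB, hLB, hdetB⟩, hsub⟩ := hL
  obtain ⟨v, hv0, hvo, hLv⟩ := S8.ortho_basis_of_hyp L hyp n 0 0 n ({0} : Set (Vn 0)) L
    S8.isLatticeOfRank_triv ⟨B, hB, hLB⟩ (S8.latticeIso_zero_dsum L)
  exact S8.final hn L B hB hLB hdetB hsub v hv0 hvo hLv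
end
end

section
/- Let n ≥ 1, let s > n/2 and q > 0 be real, and define f : ℝ^n → ℝ by f(y) := (‖y‖² + q)^{−s}. Then the Fourier transform of f satisfies, for all w ∈ ℝ^n, f̂(w) = (π^{n/2} q^{n/2−s} / Γ(s)) · K̄_{s−n/2}(2π √q ‖w‖). -/
open scoped BigOperators
open MeasureTheory Filter Matrix

noncomputable section

section Statement9Aux

open Real Set

lemma stmt9_sq_le_sinh_sq (x : ℝ) : x^2 ≤ Real.sinh x ^ 2 := by
  have h : ∀ y : ℝ, 0 ≤ y → y^2 ≤ Real.sinh y ^ 2 := fun y hy =>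
    pow_le_pow_left₀ hy (Real.self_le_sinh_iff.mpr hy) 2
  rcases le_total 0 x with hx | hx
  · exact h x hx
  · have := h (-x) (by linarith)
    rwa [Real.sinh_neg, neg_sq, neg_sq] at this

lemma stmt9_sq_div_four_le_cosh (u : ℝ) : u^2/4 ≤ Real.cosh u := by
  have h1 : Real.cosh (2 * (u/2)) = Real.cosh (u/2)^2 + Real.sinh (u/2)^2 :=
    Real.cosh_two_mul _
  have h2 := stmt9_sq_le_sinh_sq (u/2)
  have h3 : (0:ℝ) ≤ Real.cosh (u/2)^2 := sq_nonneg _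
  have h4 : 2 * (u/2) = u := by ring
  rw [h4] at h1
  nlinarith

lemma stmt9_integrable_exp_mul_sub_cosh (ν c : ℝ) (hc : 0 < c) :
    Integrable (fun u : ℝ => Real.exp (ν * u - c * Real.cosh u)) := by
  have hmeas : AEStronglyMeasurable (fun u : ℝ => Real.exp (ν * u - c * Real.cosh u)) volume :=
    (Real.continuous_exp.comp (by continuity)).aestronglyMeasurable
  have hc4 : 0 < c/4 := by linarith
  have hInt : Integrable (fun u : ℝ =>
      Real.exp (ν^2/(4*(c/4))) * Real.exp (-(c/4) * (u - ν/(2*(c/4)))^2)) :=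
    ((integrable_exp_neg_mul_sq hc4).comp_sub_right (ν/(2*(c/4)))).const_mul _
  refine hInt.mono' hmeas (Filter.Eventually.of_forall fun u => ?_)
  rw [Real.norm_eq_abs, abs_of_nonneg (Real.exp_pos _).le, ← Real.exp_add]
  apply Real.exp_le_exp.mpr
  have h1 := stmt9_sq_div_four_le_cosh u
  have h2 : c * (u^2/4) ≤ c * Real.cosh u := by nlinarith
  have key : ν^2/(4*(c/4)) + (-(c/4) * (u - ν/(2*(c/4)))^2) = ν*u - c * (u^2/4) := by
    field_simp; ring
  linarith [key ▸ le_refl (ν^2/(4*(c/4)) + (-(c/4) * (u - ν/(2*(c/4)))^2))]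

lemma stmt9_line_int_eq_two_K (ν m : ℝ)
    (hInt : Integrable (fun u : ℝ => Real.exp (ν * u - 2*m * Real.cosh u))) :
    ∫ u : ℝ, Real.exp (ν * u - 2*m * Real.cosh u) = 2 * Kfun ν (2*m) := by
  have hsplit : ∫ u : ℝ, Real.exp (ν * u - 2*m * Real.cosh u)
      = (∫ u in Iic (0:ℝ), Real.exp (ν * u - 2*m * Real.cosh u))
        + ∫ u in Ioi (0:ℝ), Real.exp (ν * u - 2*m * Real.cosh u) := by
    rw [← setIntegral_union (Iic_disjoint_Ioi le_rfl) measurableSet_Ioi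
      hInt.integrableOn hInt.integrableOn, Iic_union_Ioi, setIntegral_univ]
  have hneg : (∫ u in Iic (0:ℝ), Real.exp (ν * u - 2*m * Real.cosh u))
      = ∫ u in Ioi (0:ℝ), Real.exp (ν * (-u) - 2*m * Real.cosh (-u)) := by
    have := integral_comp_neg_Ioi (c := 0)
      (f := fun u => Real.exp (ν * u - 2*m * Real.cosh u))
    rw [neg_zero] at this
    rw [← this]
  rw [hsplit, hneg, ← integral_add (by
      exact (hInt.comp_neg).integrableOn.congr_fun (fun u hu => by simp) measurableSet_Ioi)
    hInt.integrableOn]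
  unfold Kfun
  rw [← integral_const_mul]
  refine setIntegral_congr_fun measurableSet_Ioi (fun u hu => ?_)
  rw [Real.cosh_neg, Real.cosh_eq (ν*u)]
  rw [sub_eq_add_neg, sub_eq_add_neg, Real.exp_add, Real.exp_add, mul_neg, Real.exp_neg]
  ring_nf

lemma stmt9_cov (ν a b : ℝ) (ha : 0 < a) (hb : 0 < b) :
    ∫ t in Set.Ioi (0:ℝ), t ^ (ν - 1) * Real.exp (-(a * t) - b / t)
      = Real.sqrt (b/a) ^ ν *
        ∫ u : ℝ, Real.exp (ν * u - 2 * Real.sqrt (a*b) * Real.cosh u) := by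
  set c := Real.sqrt (b/a) with hcdef
  set m := Real.sqrt (a*b) with hmdef
  have hc : 0 < c := Real.sqrt_pos.mpr (div_pos hb ha)
  have hm : 0 < m := Real.sqrt_pos.mpr (mul_pos ha hb)
  have hac : a * c = m := by
    rw [hcdef, hmdef, Real.sqrt_div hb.le a, Real.sqrt_mul ha.le,
      show a * (Real.sqrt b / Real.sqrt a) = (a / Real.sqrt a) * Real.sqrt b by ring,
      Real.div_sqrt]
  have hbc : b / c = m := by
    rw [hcdef, hmdef, Real.sqrt_div hb.le a, Real.sqrt_mul ha.le, div_div_eq_mul_div,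
      mul_comm b (Real.sqrt a), mul_div_assoc, Real.div_sqrt, mul_comm]
  have himg : (fun u : ℝ => c * Real.exp u) '' Set.univ = Set.Ioi 0 := by
    ext x
    simp only [Set.image_univ, Set.mem_range, Set.mem_Ioi]
    constructor
    · rintro ⟨u, rfl⟩; positivity
    · intro hx
      exact ⟨Real.log (x / c), by rw [Real.exp_log (by positivity)]; field_simp⟩
  rw [← himg,
    integral_image_eq_integral_abs_deriv_smul MeasurableSet.univ
      (fun u _ => ((Real.hasDerivAt_exp u).const_mul c).hasDerivWithinAt)
      (fun u _ v _ huv => by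
        simpa using Real.exp_injective (mul_left_cancel₀ hc.ne' huv)),
    ← integral_const_mul]
  rw [Measure.restrict_univ]
  refine integral_congr_ae (Filter.Eventually.of_forall fun u => ?_)
  have he : (0:ℝ) < Real.exp u := Real.exp_pos u
  simp only []
  rw [smul_eq_mul, abs_of_pos (by positivity)]
  have h1 : (c * Real.exp u) ^ (ν - 1) = c ^ (ν-1) * Real.exp ((ν-1) * u) := by
    rw [Real.mul_rpow hc.le he.le, Real.rpow_def_of_pos he, Real.log_exp, mul_comm u (ν-1)]
  have h2 : a * (c * Real.exp u) = m * Real.exp u := by rw [← mul_assoc, hac]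
  have h3 : b / (c * Real.exp u) = m * Real.exp (-u) := by
    rw [Real.exp_neg, div_mul_eq_div_div, hbc, div_eq_mul_inv]
  rw [h1, h2, h3, Real.cosh_eq]
  have h4 : c ^ ν = c ^ (ν - 1) * c := by
    rw [show ν = (ν - 1) + 1 by ring, Real.rpow_add hc, Real.rpow_one]; ring_nf
  rw [h4]
  rw [show ν * u - 2 * m * ((Real.exp u + Real.exp (-u))/2)
      = (ν-1)*u + u + (-(m * Real.exp u) - m * Real.exp (-u)) by ring]
  rw [Real.exp_add, Real.exp_add, show -(m * Real.exp u) - m * Real.exp (-u)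
      = -(m*Real.exp u) + -(m * Real.exp (-u)) by ring, Real.exp_add]
  ring

lemma stmt9_bessel (ν a b : ℝ) (ha : 0 < a) (hb : 0 < b) :
    ∫ t in Set.Ioi (0:ℝ), t ^ (ν - 1) * Real.exp (-(a * t) - b / t)
      = 2 * (b/a) ^ (ν/2) * Kfun ν (2 * Real.sqrt (a*b)) := by
  have hm : 0 < Real.sqrt (a*b) := Real.sqrt_pos.mpr (mul_pos ha hb)
  rw [stmt9_cov ν a b ha hb,
    stmt9_line_int_eq_two_K ν (Real.sqrt (a*b))
      (stmt9_integrable_exp_mul_sub_cosh ν (2 * Real.sqrt (a*b)) (by linarith))]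
  have h : Real.sqrt (b/a) ^ ν = (b/a) ^ (ν/2) := by
    rw [Real.sqrt_eq_rpow, ← Real.rpow_mul (div_pos hb ha).le]
    ring_nf
  rw [h]; ring

open Complex in
open scoped FourierTransform RealInnerProductSpace in
lemma stmt9_gauss_eval (n : ℕ) (t : ℝ) (ht : 0 < t) (w : EuclideanSpace ℝ (Fin n)) :
    (∫ y : EuclideanSpace ℝ (Fin n),
        Complex.exp (((-2 * π * ⟪y, w⟫ : ℝ) : ℂ) * Complex.I) * Complex.exp (-(t:ℂ) * ‖y‖^2))
      = (((π/t) ^ ((n:ℝ)/2) * Real.exp (-π^2 * ‖w‖^2 / t) : ℝ) : ℂ) := by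
  have h := fourier_gaussian_innerProductSpace (V := EuclideanSpace ℝ (Fin n))
    (b := (t:ℂ)) (by simpa using ht) w
  rw [Real.fourier_eq'] at h
  simp only [smul_eq_mul] at h
  rw [h]
  have hπt : (0:ℝ) ≤ π / t := by positivity
  rw [Complex.ofReal_mul, Complex.ofReal_cpow hπt, Complex.ofReal_exp]
  have h1 : ((π : ℂ) / (t:ℂ)) = ((π / t : ℝ) : ℂ) := by push_cast; ring
  have h2 : ((Module.finrank ℝ (EuclideanSpace ℝ (Fin n)) : ℂ) / 2) = (((n:ℝ)/2 : ℝ) : ℂ) := by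
    rw [finrank_euclideanSpace_fin]; push_cast; ring
  rw [h1, h2]
  congr 1
  push_cast
  ring

lemma stmt9_int_sch (s r : ℝ) (hs : 0 < s) (hr : 0 < r) :
    MeasureTheory.IntegrableOn (fun t : ℝ => t ^ (s-1) * Real.exp (-(r*t))) (Set.Ioi 0) := by
  have h := integrableOn_rpow_mul_exp_neg_mul_rpow (s := s-1) (p := 1) (by linarith) one_pos hr
  refine h.congr_fun (fun t ht => ?_) measurableSet_Ioi
  beta_reduce
  rw [Real.rpow_one, neg_mul]

end Statement9Aux

/-- For `s > n/2` and `q > 0`, the Fourier transform of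
`f(y) = (‖y‖² + q)^{-s}` is `f̂(w) = (π^{n/2} q^{n/2-s} / Γ(s)) K̄_{s-n/2}(2π√q ‖w‖)`. -/
theorem statement9 (n : ℕ) (hn : 1 ≤ n) (s q : ℝ) (hs : (n : ℝ) / 2 < s) (hq : 0 < q)
    (f : Vn n → ℂ) (hf : ∀ y, f y = (((‖y‖ ^ 2 + q) ^ (-s) : ℝ) : ℂ)) (w : Vn n) :
    FourierTransform.fourier f w =
      (((Real.pi ^ ((n : ℝ) / 2) * q ^ ((n : ℝ) / 2 - s) / Real.Gamma s) *
        Kbar (s - (n : ℝ) / 2) (2 * Real.pi * Real.sqrt q * ‖w‖) : ℝ) : ℂ) := by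
  classical
  have hn' : (1:ℝ) ≤ (n:ℝ) := by exact_mod_cast hn
  have hs0 : (0:ℝ) < s := lt_of_le_of_lt (by positivity) hs
  set α := s - (n:ℝ)/2 with hαdef
  have hα0 : 0 < α := sub_pos.mpr hs
  have hΓ : (0:ℝ) < Real.Gamma s := Real.Gamma_pos_of_pos hs0
  set b := Real.pi^2 * ‖w‖^2 with hbdef
  set x := 2 * Real.pi * Real.sqrt q * ‖w‖ with hxdef
  have hr : ∀ y : Vn n, 0 < ‖y‖^2 + q := fun y => by positivity
  set e : Vn n → ℂ :=
    fun y => Complex.exp (((-2 * Real.pi * (inner ℝ y w : ℝ) : ℝ) : ℂ) * Complex.I) with hedef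
  set G : Vn n × ℝ → ℂ :=
    fun p => ((p.2 ^ (s-1) * Real.exp (-((‖p.1‖^2 + q) * p.2)) : ℝ) : ℂ) * e p.1 with hGdef
  have h1r : ∀ y : Vn n, (1/(‖y‖^2+q)) ^ s = (‖y‖^2+q) ^ (-s) := by
    intro y
    rw [one_div, Real.inv_rpow (hr y).le, ← Real.rpow_neg (hr y).le]
  -- the t-integral for fixed y
  have hYint : ∀ y : Vn n, (∫ t in Set.Ioi (0:ℝ), G (y, t))
      = ((Real.Gamma s : ℝ) : ℂ) * (((‖y‖^2+q) ^ (-s) : ℝ) : ℂ) * e y := by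
    intro y
    have hore : (∫ t in Set.Ioi (0:ℝ), ((t ^ (s-1) * Real.exp (-((‖y‖^2+q) * t)) : ℝ) : ℂ))
        = ((Real.Gamma s * (‖y‖^2+q)^(-s) : ℝ) : ℂ) := by
      calc (∫ t in Set.Ioi (0:ℝ), ((t ^ (s-1) * Real.exp (-((‖y‖^2+q) * t)) : ℝ) : ℂ))
          = ((∫ t in Set.Ioi (0:ℝ), t ^ (s-1) * Real.exp (-((‖y‖^2+q) * t)) : ℝ) : ℂ) :=
            integral_ofReal
        _ = _ := by
            rw [Real.integral_rpow_mul_exp_neg_mul_Ioi hs0 (hr y), h1r y, mul_comm]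
    simp only [hGdef]
    rw [MeasureTheory.integral_mul_const, hore]
    push_cast
    ring
  -- per-y integrability in t
  have hTintOn : ∀ y : Vn n, MeasureTheory.IntegrableOn (fun t => G (y, t)) (Set.Ioi 0) := by
    intro y
    have h0 : MeasureTheory.IntegrableOn
        (fun t : ℝ => ((t ^ (s-1) * Real.exp (-((‖y‖^2+q)*t)) : ℝ) : ℂ) * e y) (Set.Ioi 0) :=
      ((stmt9_int_sch s (‖y‖^2+q) hs0 (hr y)).ofReal (𝕜 := ℂ)).mul_const (e y)
    exact h0.congr_fun (fun t ht => by simp only [hGdef]) measurableSet_Ioi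
  -- the norm integral
  have hNorm : ∀ y : Vn n, (∫ t in Set.Ioi (0:ℝ), ‖G (y, t)‖)
      = Real.Gamma s * (‖y‖^2+q) ^ (-s) := by
    intro y
    have hEq : ∀ t ∈ Set.Ioi (0:ℝ),
        ‖G (y,t)‖ = t ^ (s-1) * Real.exp (-((‖y‖^2+q) * t)) := by
      intro t ht
      have habs : ‖e y‖ = 1 := Complex.norm_exp_ofReal_mul_I _
      simp only [hGdef, norm_mul, habs, mul_one, Complex.norm_real, Real.norm_eq_abs]
      rw [← abs_mul]
      exact abs_of_nonneg (mul_nonneg (Real.rpow_nonneg (le_of_lt ht) _) (Real.exp_pos _).le)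
    rw [MeasureTheory.setIntegral_congr_fun measurableSet_Ioi hEq,
      Real.integral_rpow_mul_exp_neg_mul_Ioi hs0 (hr y), h1r y, mul_comm]
  -- integrability of the majorant in y
  have hMaj : MeasureTheory.Integrable (fun y : Vn n => Real.Gamma s * (‖y‖^2+q) ^ (-s)) := by
    set k := min q 1 with hkdef
    have hk0 : 0 < k := lt_min hq one_pos
    have hbase : MeasureTheory.Integrable (fun y : Vn n => (1+‖y‖^2) ^ (-(2*s)/2)) :=
      integrable_rpow_neg_one_add_norm_sq (by rw [finrank_euclideanSpace_fin]; linarith)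
    have hexp2 : -(2*s)/2 = -s := by ring
    rw [hexp2] at hbase
    refine (hbase.const_mul (Real.Gamma s * k ^ (-s))).mono' ?_
      (Filter.Eventually.of_forall fun y => ?_)
    · exact (continuous_const.mul (((continuous_norm.pow 2).add continuous_const).rpow_const
        (fun y => Or.inl (hr y).ne'))).aestronglyMeasurable
    · rw [Real.norm_eq_abs, abs_of_nonneg (by positivity)]
      have h6 : k ≤ q := min_le_left _ _
      have h7 : k ≤ 1 := min_le_right _ _
      have h5 : k * (1+‖y‖^2) ≤ ‖y‖^2 + q := by nlinarith [sq_nonneg ‖y‖]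
      have h8 : (‖y‖^2+q) ^ (-s) ≤ (k * (1+‖y‖^2)) ^ (-s) :=
        Real.rpow_le_rpow_of_nonpos (by positivity) h5 (by linarith)
      rw [Real.mul_rpow hk0.le (by positivity)] at h8
      calc Real.Gamma s * (‖y‖^2+q) ^ (-s)
          ≤ Real.Gamma s * (k ^ (-s) * (1+‖y‖^2) ^ (-s)) :=
            mul_le_mul_of_nonneg_left h8 hΓ.le
        _ = Real.Gamma s * k ^ (-s) * (1+‖y‖^2) ^ (-s) := by ring
  -- measurability of G over the product
  have hGmeas : MeasureTheory.AEStronglyMeasurable G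
      ((volume : MeasureTheory.Measure (Vn n)).prod (volume.restrict (Set.Ioi 0))) := by
    have he : Continuous e := by
      rw [hedef]
      exact Complex.continuous_exp.comp ((Complex.continuous_ofReal.comp
        ((continuous_const.mul (Continuous.inner continuous_id continuous_const))
          )).mul continuous_const)
    refine Measurable.aestronglyMeasurable ?_
    simp only [hGdef]
    have hm1 : Measurable fun p : Vn n × ℝ => p.2 ^ (s-1) := by fun_prop
    have hm2 : Measurable fun p : Vn n × ℝ => Real.exp (-((‖p.1‖^2 + q) * p.2)) := by fun_prop
    exact (Complex.measurable_ofReal.comp (hm1.mul hm2)).mul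
      ((he.measurable).comp measurable_fst)
  -- integrability of G
  have hGint : MeasureTheory.Integrable G
      ((volume : MeasureTheory.Measure (Vn n)).prod (volume.restrict (Set.Ioi 0))) := by
    rw [MeasureTheory.integrable_prod_iff hGmeas]
    exact ⟨Filter.Eventually.of_forall hTintOn,
      hMaj.congr (Filter.Eventually.of_forall fun y => (hNorm y).symm)⟩
  -- swap the order of integration
  have hswap : (∫ y : Vn n, ∫ t in Set.Ioi (0:ℝ), G (y, t))
      = ∫ t in Set.Ioi (0:ℝ), ∫ y : Vn n, G (y, t) :=
    MeasureTheory.integral_integral_swap hGint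
  -- identify the LHS
  have hL : ((Real.Gamma s : ℝ) : ℂ) * FourierTransform.fourier f w
      = ∫ y : Vn n, ∫ t in Set.Ioi (0:ℝ), G (y, t) := by
    rw [Real.fourier_eq']
    simp only [smul_eq_mul]
    rw [← MeasureTheory.integral_const_mul]
    refine MeasureTheory.integral_congr_ae (Filter.Eventually.of_forall fun y => ?_)
    simp only [hYint y, hf y, hedef]
    push_cast
    ring
  -- compute the inner y-integral for each t > 0
  have hTval : ∀ t ∈ Set.Ioi (0:ℝ), (∫ y : Vn n, G (y, t))
      = ((Real.pi ^ ((n:ℝ)/2) * (t ^ (α - 1) * Real.exp (-(q*t) - b/t)) : ℝ) : ℂ) := by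
    intro t ht
    have ht0 : (0:ℝ) < t := ht
    have hsplit : ∀ y : Vn n, G (y, t)
        = ((t ^ (s-1) * Real.exp (-(q*t)) : ℝ) : ℂ) *
          (Complex.exp (((-2 * Real.pi * (inner ℝ y w : ℝ) : ℝ):ℂ) * Complex.I) *
            Complex.exp (-(t:ℂ) * (‖y‖:ℂ)^2)) := by
      intro y
      simp only [hGdef, hedef]
      have hre : Real.exp (-((‖y‖^2+q) * t)) = Real.exp (-(q*t)) * Real.exp (-(t * ‖y‖^2)) := by
        rw [← Real.exp_add]; ring_nf
      rw [hre, show (-(t:ℂ) * (‖y‖:ℂ)^2) = ((-(t * ‖y‖^2) : ℝ) : ℂ) by push_cast; ring]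
      push_cast
      ring
    calc (∫ y : Vn n, G (y, t))
        = ∫ y : Vn n, ((t ^ (s-1) * Real.exp (-(q*t)) : ℝ) : ℂ) *
            (Complex.exp (((-2 * Real.pi * (inner ℝ y w : ℝ) : ℝ):ℂ) * Complex.I) *
              Complex.exp (-(t:ℂ) * (‖y‖:ℂ)^2)) :=
          MeasureTheory.integral_congr_ae (Filter.Eventually.of_forall hsplit)
      _ = ((Real.pi ^ ((n:ℝ)/2) * (t ^ (α - 1) * Real.exp (-(q*t) - b/t)) : ℝ) : ℂ) := ?_
    rw [MeasureTheory.integral_const_mul, stmt9_gauss_eval n t ht0 w,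
      ← Complex.ofReal_mul]
    congr 1
    have hts : t ^ (α - 1) = t ^ (s-1) / t ^ ((n:ℝ)/2) := by
      rw [← Real.rpow_sub ht0]
      congr 1
      rw [hαdef]; ring
    have hee : Real.exp (-(q*t) - b/t) = Real.exp (-(q*t)) * Real.exp (-Real.pi^2 * ‖w‖^2 / t) := by
      rw [← Real.exp_add, hbdef]
      congr 1
      ring
    rw [hts, hee, Real.div_rpow Real.pi_pos.le ht0.le]
    have htn : t ^ ((n:ℝ)/2) ≠ 0 := by positivity
    field_simp
  -- pass to the real integral
  have hstep : (∫ t in Set.Ioi (0:ℝ), ∫ y : Vn n, G (y, t))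
      = (((∫ t in Set.Ioi (0:ℝ),
          Real.pi ^ ((n:ℝ)/2) * (t ^ (α - 1) * Real.exp (-(q*t) - b/t))) : ℝ) : ℂ) := by
    rw [MeasureTheory.setIntegral_congr_fun measurableSet_Ioi hTval]
    exact integral_ofReal
  -- evaluate the real integral
  have hq' : q ^ ((n:ℝ)/2 - s) = q ^ (-α) := by rw [hαdef]; ring_nf
  have hJ : (∫ t in Set.Ioi (0:ℝ),
        Real.pi ^ ((n:ℝ)/2) * (t ^ (α - 1) * Real.exp (-(q*t) - b/t)))
      = Real.Gamma s *
        (Real.pi ^ ((n:ℝ)/2) * q ^ ((n:ℝ)/2 - s) / Real.Gamma s * Kbar α x) := by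
    rw [MeasureTheory.integral_const_mul]
    by_cases hw : w = 0
    · have hb0 : b = 0 := by rw [hbdef, hw, norm_zero]; ring
      have hx0 : x = 0 := by rw [hxdef, hw, norm_zero]; ring
      have hEq : ∀ t ∈ Set.Ioi (0:ℝ),
          t^(α-1) * Real.exp (-(q*t) - b/t) = t^(α-1) * Real.exp (-(q*t)) := by
        intro t ht
        rw [hb0, zero_div, sub_zero]
      rw [MeasureTheory.setIntegral_congr_fun measurableSet_Ioi hEq,
        Real.integral_rpow_mul_exp_neg_mul_Ioi hα0 hq, hx0]
      rw [Kbar, if_pos rfl]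
      rw [one_div, Real.inv_rpow hq.le, ← Real.rpow_neg hq.le, hq']
      field_simp
    · have hw' : 0 < ‖w‖ := norm_pos_iff.mpr hw
      have hb0 : 0 < b := by rw [hbdef]; positivity
      have hx0 : 0 < x := by rw [hxdef]; positivity
      rw [stmt9_bessel α q b hq hb0]
      have hsq : 2 * Real.sqrt (q*b) = x := by
        rw [hbdef, hxdef, show q * (Real.pi^2 * ‖w‖^2) = q * (Real.pi*‖w‖)^2 by ring,
          Real.sqrt_mul hq.le, Real.sqrt_sq (by positivity)]
        ring
      rw [hsq, Kbar, if_neg hx0.ne']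
      have hscal : 2 * (b/q) ^ (α/2) = q ^ (-α) * (2 ^ (1-α) * x ^ α) := by
        set p := Real.pi * ‖w‖ with hpdef
        have hp : 0 < p := by rw [hpdef]; positivity
        have hbp : b / q = p^2 / q := by rw [hbdef, hpdef]; ring
        have hxp : x = 2 * Real.sqrt q * p := by rw [hxdef, hpdef]; ring
        have h2 : ((p:ℝ)^2) ^ (α/2) = p ^ α := by
          rw [← Real.rpow_natCast p 2, ← Real.rpow_mul hp.le]
          congr 1
          push_cast
          ring
        have h3 : (b/q) ^ (α/2) = p ^ α * q ^ (-(α/2)) := by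
          rw [hbp, Real.div_rpow (sq_nonneg p) hq.le, h2, Real.rpow_neg hq.le,
            div_eq_mul_inv]
        have h4 : x ^ α = 2 ^ α * (q ^ (α/2) * p ^ α) := by
          rw [hxp, Real.mul_rpow (by positivity) hp.le,
            Real.mul_rpow (by norm_num) (Real.sqrt_nonneg q),
            Real.sqrt_eq_rpow, ← Real.rpow_mul hq.le]
          ring_nf
        rw [h3, h4]
        have h5 : (2:ℝ) ^ (1-α) * 2 ^ α = 2 := by
          rw [← Real.rpow_add (by norm_num : (0:ℝ) < 2)]
          norm_num
        have h6 : q ^ (-α) * q ^ (α/2) = q ^ (-(α/2)) := by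
          rw [← Real.rpow_add hq]
          ring_nf
        calc 2 * (p ^ α * q ^ (-(α/2))) = (2 ^ (1-α) * 2 ^ α) * (p ^ α * (q ^ (-α) * q ^ (α/2))) := by
              rw [h5, h6]
          _ = q ^ (-α) * (2 ^ (1-α) * (2 ^ α * (q ^ (α/2) * p ^ α))) := by ring
      rw [hq', hscal]
      field_simp
  -- conclude
  have final : ((Real.Gamma s : ℝ):ℂ) * FourierTransform.fourier f w
      = ((Real.Gamma s : ℝ):ℂ) *
        (((Real.pi ^ ((n:ℝ)/2) * q ^ ((n:ℝ)/2 - s) / Real.Gamma s) * Kbar α x : ℝ):ℂ) := by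
    rw [hL, hswap, hstep, hJ]
    push_cast
    ring
  have hΓC : ((Real.Gamma s : ℝ):ℂ) ≠ 0 := by exact_mod_cast hΓ.ne'
  exact mul_left_cancel₀ hΓC final
end
end
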